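/- Let G = PSL(2,ℝ) × PSL(2,ℝ) and let A be the maximal diagonal subgroup of G. If F is a closed connected subgroup of G strictly containing A, then F contains at least one of the four unipotent root subgroups U₁⁺ = {(±(1 t; 0 1), 1) : t ∈ ℝ}, U₁⁻ = {(±(1 0; t 1), 1) : t ∈ ℝ}, U₂⁺ = {(1, ±(1 t; 0 1)) : t ∈ ℝ}, U₂⁻ = {(1, ±(1 0; t 1)) : t ∈ ℝ}. -/

import Mathlib

noncomputable section

open Matrix MatrixGroups MeasureTheory Filter Topology OnePoint
open scoped UpperHalfPlane

/-- `SL(2, ℝ)`. -/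
abbrev SL2 : Type := Matrix.SpecialLinearGroup (Fin 2) ℝ

/-- `PSL(2, ℝ) = SL(2, ℝ)/{±1}`, the quotient of `SL(2, ℝ)` by its center. -/
abbrev PSL2 : Type := Matrix.ProjectiveSpecialLinearGroup (Fin 2) ℝ

/-- Topology on `SL(2, ℝ)`, induced from the space of matrices. -/
instance : TopologicalSpace SL2 :=
  TopologicalSpace.induced (fun g : SL2 => (g : Matrix (Fin 2) (Fin 2) ℝ)) inferInstance

/-- The quotient topology on `PSL(2, ℝ)`. -/
instance : TopologicalSpace PSL2 := instTopologicalSpaceQuotient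

instance : MeasurableSpace PSL2 := borel PSL2

/-- The group `G = PSL(2, ℝ) × PSL(2, ℝ)`. -/
abbrev G2 : Type := PSL2 × PSL2

/-- The projection `SL(2, ℝ) → PSL(2, ℝ)`. -/
def pr : SL2 →* PSL2 := QuotientGroup.mk' (Subgroup.center SL2)

/-- A representative in `SL(2, ℝ)` of an element of `PSL(2, ℝ)`.  (All the constructions
below built from `rep` are in fact independent of the choice of representative, because the
two lifts of an element of `PSL(2, ℝ)` differ only by sign.) -/
def rep (x : PSL2) : SL2 := Quotient.out x

/-- The boundary `∂ℍ = ℝ ∪ {∞}` of the upper half-plane. -/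
abbrev Bdry : Type := OnePoint ℝ

/-- The extended Möbius action of `SL(2, ℝ)` on `∂ℍ = ℝ ∪ {∞}`. -/
def mobSL (g : SL2) (p : Bdry) : Bdry :=
  p.elim (if g 1 0 = 0 then ∞ else ((g 0 0 / g 1 0 : ℝ) : Bdry))
    (fun x => if g 1 0 * x + g 1 1 = 0 then ∞
      else (((g 0 0 * x + g 0 1) / (g 1 0 * x + g 1 1) : ℝ) : Bdry))

/-- The extended Möbius action of `PSL(2, ℝ)` on the boundary `∂ℍ = ℝ ∪ {∞}`
(independent of the choice of representative, since `-g` and `g` act alike). -/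
def mob (x : PSL2) (p : Bdry) : Bdry := mobSL (rep x) p

/-- The Möbius action of `PSL(2, ℝ)` on the upper half-plane `ℍ`
(independent of the choice of representative, since `-g` and `g` act alike). -/
def hact (x : PSL2) (z : ℍ) : ℍ := rep x • z

/-- The componentwise action of `G` on `ℍ × ℍ`. -/
def hact2 (x : G2) (z : ℍ × ℍ) : ℍ × ℍ := (hact x.1 z.1, hact x.2 z.2)

/-- The componentwise action of `G` on the Furstenberg boundary `F = ∂ℍ × ∂ℍ`. -/
def mob2 (x : G2) (ξ : Bdry × Bdry) : Bdry × Bdry := (mob x.1 ξ.1, mob x.2 ξ.2)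

/-- The diagonal matrix `diag (exp t, exp (-t))` in `SL(2, ℝ)`; as `t` ranges over `ℝ`,
these (together with their negatives) are exactly the diagonal matrices `±diag (λ, λ⁻¹)`
with `λ > 0`. -/
def dm (t : ℝ) : SL2 :=
  ⟨!![Real.exp t, 0; 0, Real.exp (-t)], by
    simp [Matrix.det_fin_two_of, ← Real.exp_add]⟩

lemma dm_mul (t s : ℝ) : dm t * dm s = dm (t + s) := by
  apply Subtype.ext
  rw [Matrix.SpecialLinearGroup.coe_mul]
  simp only [dm, Matrix.SpecialLinearGroup.coe_mul]
  rw [Matrix.mul_fin_two]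
  norm_num [← Real.exp_add]
  ring_nf

lemma dm_zero : dm 0 = 1 := by
  apply Subtype.ext
  simp [dm, Matrix.one_fin_two]

/-- The maximal diagonal subgroup `A` of `G = PSL(2, ℝ) × PSL(2, ℝ)`. -/
def Adiag : Subgroup G2 where
  carrier := {x | ∃ t s : ℝ, x = (pr (dm t), pr (dm s))}
  mul_mem' := by
    rintro _ _ ⟨t, s, rfl⟩ ⟨t', s', rfl⟩
    exact ⟨t + t', s + s', by simp [Prod.ext_iff, ← _root_.map_mul, dm_mul]⟩
  one_mem' := ⟨0, 0, by simp [dm_zero, Prod.ext_iff]⟩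
  inv_mem' := by
    rintro _ ⟨t, s, rfl⟩
    refine ⟨-t, -s, ?_⟩
    have h1 : dm (-t) * dm t = 1 := by rw [dm_mul]; simpa using dm_zero
    have h2 : dm (-s) * dm s = 1 := by rw [dm_mul]; simpa using dm_zero
    simp [Prod.ext_iff, eq_comm, eq_inv_iff_mul_eq_one, ← _root_.map_mul, h1, h2]

/-- The diagonal sub-semigroup `A⁺` of `G` (diagonal entries `λᵢ = exp tᵢ ≥ 1`). -/
def Apos : Set G2 := {x | ∃ t s : ℝ, 0 ≤ t ∧ 0 ≤ s ∧ x = (pr (dm t), pr (dm s))}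

/-- The absolute value of the trace, well defined on `PSL(2, ℝ)`. -/
def trAbs (x : PSL2) : ℝ := |((rep x : Matrix (Fin 2) (Fin 2) ℝ)).trace|

/-- An element of `PSL(2, ℝ)` is hyperbolic if `|trace| > 2`. -/
def IsHyperbolicPSL (x : PSL2) : Prop := 2 < trAbs x

/-- An element of `PSL(2, ℝ)` is parabolic if it is nontrivial and `|trace| = 2`. -/
def IsParabolicPSL (x : PSL2) : Prop := x ≠ 1 ∧ trAbs x = 2

/-- An element of `PSL(2, ℝ)` is elliptic if `|trace| < 2`. -/
def IsEllipticPSL (x : PSL2) : Prop := trAbs x < 2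

/-- The dominant eigenvalue `(|tr| + √(tr² - 4))/2` of (a lift of) an element of
`PSL(2, ℝ)`; for a hyperbolic element this is its dominant (> 1) eigenvalue. -/
def domEig (x : PSL2) : ℝ := (trAbs x + Real.sqrt (trAbs x ^ 2 - 4)) / 2

/-- An element of `G` is hyperbolic if both components are. -/
def IsHyperbolicG (γ : G2) : Prop := IsHyperbolicPSL γ.1 ∧ IsHyperbolicPSL γ.2

/-- An element of `G` is parabolic if both components are. -/
def IsParabolicG (γ : G2) : Prop := IsParabolicPSL γ.1 ∧ IsParabolicPSL γ.2

/-- An element of `G` is elliptic if both components are. -/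
def IsEllipticG (γ : G2) : Prop := IsEllipticPSL γ.1 ∧ IsEllipticPSL γ.2

/-- A nontrivial element of `G` is mixed if its two components are not of the same kind. -/
def IsMixed (γ : G2) : Prop :=
  γ ≠ 1 ∧ ¬ IsHyperbolicG γ ∧ ¬ IsParabolicG γ ∧ ¬ IsEllipticG γ

/-- A hyperbolic element of `G` is hyper-regular if the dominant eigenvalues of its two
components are distinct. -/
def IsHyperRegular (γ : G2) : Prop := IsHyperbolicG γ ∧ domEig γ.1 ≠ domEig γ.2

/-- `Γ` is an irreducible lattice of `G = PSL(2, ℝ) × PSL(2, ℝ)`: it is discrete, of finite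
covolume for Haar measure, both coordinate projections have dense image, and `Γ` meets the
kernel of each coordinate projection trivially. -/
structure IsIrreducibleLattice (Γ : Subgroup G2) : Prop where
  discrete : DiscreteTopology Γ
  finiteCovolume : ∃ μ : Measure G2, μ.IsHaarMeasure ∧
    ∃ s : Set G2, IsFundamentalDomain Γ s μ ∧ μ s < ⊤
  dense_fst : Dense (Prod.fst '' (Γ : Set G2))
  dense_snd : Dense (Prod.snd '' (Γ : Set G2))
  ker_fst : ∀ γ ∈ Γ, γ.1 = 1 → γ = 1
  ker_snd : ∀ γ ∈ Γ, γ.2 = 1 → γ = 1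

/-- The quotient `Γ \ G` by right cosets, with the quotient topology. -/
abbrev RQ (Γ : Subgroup G2) : Type := Quotient (QuotientGroup.rightRel Γ)

/-- The class `Γ g` of `g` in `Γ \ G`. -/
def rmk (Γ : Subgroup G2) (g : G2) : RQ Γ := Quotient.mk (QuotientGroup.rightRel Γ) g

/-- The orbit `x A` of `x = Γ g` in `Γ \ G` under right translation by `A`. -/
def orbA (Γ : Subgroup G2) (g : G2) : Set (RQ Γ) := {y | ∃ a ∈ Adiag, y = rmk Γ (g * a)}

/-- The semi-orbit `x A⁺` of `x = Γ g` in `Γ \ G` under right translation by `A⁺`. -/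
def orbApos (Γ : Subgroup G2) (g : G2) : Set (RQ Γ) := {y | ∃ a ∈ Apos, y = rmk Γ (g * a)}

/-- The inclusion `ℍ ⊆ ℂ ∪ {∞}` into the one-point compactification of `ℂ`. -/
def hToC (z : ℍ) : OnePoint ℂ := ((z : ℂ) : OnePoint ℂ)

/-- The inclusion `∂ℍ = ℝ ∪ {∞} ⊆ ℂ ∪ {∞}`. -/
def bToC (p : Bdry) : OnePoint ℂ := OnePoint.map (fun x : ℝ => (x : ℂ)) p

/-- The upper unipotent matrix `(1, t; 0, 1)` in `SL(2, ℝ)`. -/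
def u1 (t : ℝ) : SL2 := ⟨!![1, t; 0, 1], by simp [Matrix.det_fin_two_of]⟩

/-- The lower unipotent matrix `(1, 0; t, 1)` in `SL(2, ℝ)`. -/
def l1 (t : ℝ) : SL2 := ⟨!![1, 0; t, 1], by simp [Matrix.det_fin_two_of]⟩

/-- The unipotent root subgroup `U₁⁺ = {(±(1, t; 0, 1), 1)}` of `G`, as a set. -/
def U1p : Set G2 := {x | ∃ t : ℝ, x = (pr (u1 t), 1)}

/-- The unipotent root subgroup `U₁⁻ = {(±(1, 0; t, 1), 1)}` of `G`, as a set. -/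
def U1m : Set G2 := {x | ∃ t : ℝ, x = (pr (l1 t), 1)}

/-- The unipotent root subgroup `U₂⁺ = {(1, ±(1, t; 0, 1))}` of `G`, as a set. -/
def U2p : Set G2 := {x | ∃ t : ℝ, x = (1, pr (u1 t))}

/-- The unipotent root subgroup `U₂⁻ = {(1, ±(1, 0; t, 1))}` of `G`, as a set. -/
def U2m : Set G2 := {x | ∃ t : ℝ, x = (1, pr (l1 t))}

instance : IsTopologicalGroup SL2 where
  continuous_mul := by
    apply continuous_induced_rng.2
    have : Continuous fun p : SL2 × SL2 => ((p.1 : Matrix (Fin 2) (Fin 2) ℝ) * (p.2 : Matrix (Fin 2) (Fin 2) ℝ)) :=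
      (continuous_induced_dom.comp continuous_fst).matrix_mul
        (continuous_induced_dom.comp continuous_snd)
    exact this
  continuous_inv := by
    apply continuous_induced_rng.2
    have : Continuous fun g : SL2 => ((g : Matrix (Fin 2) (Fin 2) ℝ)).adjugate :=
      continuous_induced_dom.matrix_adjugate
    exact this

instance : IsTopologicalGroup PSL2 := inferInstance

instance : IsTopologicalGroup G2 := inferInstance

lemma continuous_pr : Continuous pr :=
  QuotientGroup.continuous_mk (N := Subgroup.center SL2)

lemma sl2_ext {m m' : SL2} (h00 : (m : Matrix (Fin 2) (Fin 2) ℝ) 0 0 = m' 0 0)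
    (h01 : (m : Matrix (Fin 2) (Fin 2) ℝ) 0 1 = m' 0 1)
    (h10 : (m : Matrix (Fin 2) (Fin 2) ℝ) 1 0 = m' 1 0)
    (h11 : (m : Matrix (Fin 2) (Fin 2) ℝ) 1 1 = m' 1 1) : m = m' := by
  apply Subtype.ext
  rw [Matrix.eta_fin_two (m : Matrix (Fin 2) (Fin 2) ℝ),
    Matrix.eta_fin_two (m' : Matrix (Fin 2) (Fin 2) ℝ), h00, h01, h10, h11]

@[simp] lemma dm_coe (t : ℝ) :
    (dm t : Matrix (Fin 2) (Fin 2) ℝ) = !![Real.exp t, 0; 0, Real.exp (-t)] := rfl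
@[simp] lemma u1_coe (t : ℝ) : (u1 t : Matrix (Fin 2) (Fin 2) ℝ) = !![1, t; 0, 1] := rfl
@[simp] lemma l1_coe (t : ℝ) : (l1 t : Matrix (Fin 2) (Fin 2) ℝ) = !![1, 0; t, 1] := rfl

lemma u1_zero : u1 0 = 1 := by
  apply sl2_ext <;> simp [u1, Matrix.one_fin_two]

lemma l1_zero : l1 0 = 1 := by
  apply sl2_ext <;> simp [l1, Matrix.one_fin_two]

lemma exp2 (t : ℝ) : Real.exp (2 * t) = Real.exp t * Real.exp t := by
  rw [← Real.exp_add]; congr 1; ring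

lemma u1_mul (a b : ℝ) : u1 a * u1 b = u1 (a + b) := by
  apply sl2_ext <;>
    · simp [Matrix.SpecialLinearGroup.coe_mul, Matrix.mul_fin_two]
      try ring

lemma l1_mul (a b : ℝ) : l1 a * l1 b = l1 (a + b) := by
  apply sl2_ext <;>
    · simp [Matrix.SpecialLinearGroup.coe_mul, Matrix.mul_fin_two]
      try ring

lemma u1_inv (a : ℝ) : (u1 a)⁻¹ = u1 (-a) := by
  apply inv_eq_of_mul_eq_one_right
  rw [u1_mul]; simpa using u1_zero

lemma l1_inv (a : ℝ) : (l1 a)⁻¹ = l1 (-a) := by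
  apply inv_eq_of_mul_eq_one_right
  rw [l1_mul]; simpa using l1_zero

lemma dm_inv (t : ℝ) : (dm t)⁻¹ = dm (-t) := by
  apply inv_eq_of_mul_eq_one_right
  rw [dm_mul]; simpa using dm_zero

/-- Conjugation of `l1 x * u1 y` by `dm t`. -/
lemma dm_conj (t x y : ℝ) :
    dm t * (l1 x * u1 y) * dm (-t) =
      l1 (x * Real.exp (-2 * t)) * u1 (y * Real.exp (2 * t)) := by
  apply sl2_ext <;>
    · simp [Matrix.SpecialLinearGroup.coe_mul, Matrix.mul_fin_two, neg_mul,
        Real.exp_neg, exp2]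
      try field_simp
      try ring

/-- LDU decomposition of an element of `SL2` with positive upper-left entry. -/
lemma ldu (m : SL2) (h : 0 < (m : Matrix (Fin 2) (Fin 2) ℝ) 0 0) :
    m = l1 ((m : Matrix (Fin 2) (Fin 2) ℝ) 1 0 / (m : Matrix (Fin 2) (Fin 2) ℝ) 0 0) *
        dm (Real.log ((m : Matrix (Fin 2) (Fin 2) ℝ) 0 0)) *
        u1 ((m : Matrix (Fin 2) (Fin 2) ℝ) 0 1 / (m : Matrix (Fin 2) (Fin 2) ℝ) 0 0) := by
  have hdet : (m : Matrix (Fin 2) (Fin 2) ℝ).det = 1 := m.2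
  rw [Matrix.det_fin_two] at hdet
  have h0 : (m : Matrix (Fin 2) (Fin 2) ℝ) 0 0 ≠ 0 := ne_of_gt h
  have he : Real.exp (Real.log ((m : Matrix (Fin 2) (Fin 2) ℝ) 0 0)) =
      (m : Matrix (Fin 2) (Fin 2) ℝ) 0 0 := Real.exp_log h
  have he' : Real.exp (-Real.log ((m : Matrix (Fin 2) (Fin 2) ℝ) 0 0)) =
      ((m : Matrix (Fin 2) (Fin 2) ℝ) 0 0)⁻¹ := by
    rw [Real.exp_neg, he]
  apply sl2_ext <;>
    · simp [Matrix.SpecialLinearGroup.coe_mul, Matrix.mul_fin_two, he, he']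
      try field_simp
      try nlinarith [hdet]

/-- `-1` in `SL2`. -/
def neg1 : SL2 := ⟨!![-1, 0; 0, -1], by simp [Matrix.det_fin_two_of]⟩

@[simp] lemma neg1_coe : (neg1 : Matrix (Fin 2) (Fin 2) ℝ) = !![-1, 0; 0, -1] := rfl

lemma neg1_center : neg1 ∈ Subgroup.center SL2 := by
  rw [Matrix.SpecialLinearGroup.mem_center_iff]
  refine ⟨-1, by norm_num, ?_⟩
  apply Matrix.ext
  intro i j
  fin_cases i <;> fin_cases j <;>
    simp [neg1, Matrix.scalar_apply, Matrix.diagonal]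

/-- The image of the diagonal one-parameter group in `PSL2`, as a set. -/
def Rdiag : Set PSL2 := {y | ∃ t : ℝ, y = pr (dm t)}

lemma mem_Rdiag_iff (m : SL2) :
    pr m ∈ Rdiag ↔ (m : Matrix (Fin 2) (Fin 2) ℝ) 0 1 = 0 ∧
      (m : Matrix (Fin 2) (Fin 2) ℝ) 1 0 = 0 := by
  constructor
  · rintro ⟨t, ht⟩
    unfold pr at ht
    rw [eq_comm, QuotientGroup.mk'_eq_mk'] at ht
    obtain ⟨c, hc, hm⟩ := ht
    rw [Matrix.SpecialLinearGroup.mem_center_iff] at hc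
    obtain ⟨r, -, hr⟩ := hc
    have : (m : Matrix (Fin 2) (Fin 2) ℝ) =
        (dm t : Matrix (Fin 2) (Fin 2) ℝ) * Matrix.scalar (Fin 2) r := by
      rw [hr, ← Matrix.SpecialLinearGroup.coe_mul, hm]
    constructor <;>
      simp [this, Matrix.scalar_apply, Matrix.mul_apply, Fin.sum_univ_two,
        Matrix.diagonal]
  · rintro ⟨h01, h10⟩
    have hdet : (m : Matrix (Fin 2) (Fin 2) ℝ).det = 1 := m.2
    rw [Matrix.det_fin_two, h01, h10] at hdet
    simp only [mul_zero, sub_zero] at hdet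
    set a := (m : Matrix (Fin 2) (Fin 2) ℝ) 0 0 with ha
    have ha0 : a ≠ 0 := by intro h; rw [h] at hdet; simp at hdet
    rcases lt_or_gt_of_ne ha0 with hneg | hpos
    · -- a < 0 : m = dm (log (-a)) * (-1)
      refine ⟨Real.log (-a), ?_⟩
      unfold pr
      rw [eq_comm, QuotientGroup.mk'_eq_mk']
      refine ⟨neg1, neg1_center, ?_⟩
      have he : Real.exp (Real.log a) = -a := by
        rw [Real.exp_log_eq_abs ha0, abs_of_neg hneg]
      apply sl2_ext <;>
        · simp [Matrix.SpecialLinearGroup.coe_mul, Matrix.mul_fin_two, neg1_coe, he,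
            Real.exp_neg, h01, h10]
          try field_simp
          try linarith [hdet]
          try nlinarith [hdet]
    · refine ⟨Real.log a, ?_⟩
      have he : Real.exp (Real.log a) = a := Real.exp_log hpos
      have : m = dm (Real.log a) := by
        apply sl2_ext <;> simp [he, Real.exp_neg, h01, h10]
        · rfl
        · exact eq_inv_of_mul_eq_one_right hdet
      rw [this]

lemma isClosed_Rdiag : IsClosed Rdiag := by
  rw [← (QuotientGroup.isQuotientMap_mk (Subgroup.center SL2)).isClosed_preimage]
  have : (QuotientGroup.mk ⁻¹' Rdiag : Set SL2) =
      {m : SL2 | (m : Matrix (Fin 2) (Fin 2) ℝ) 0 1 = 0} ∩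
        {m : SL2 | (m : Matrix (Fin 2) (Fin 2) ℝ) 1 0 = 0} := by
    ext m
    exact mem_Rdiag_iff m
  rw [this]
  exact IsClosed.inter
    (isClosed_singleton.preimage (continuous_induced_dom.matrix_elem 0 1))
    (isClosed_singleton.preimage (continuous_induced_dom.matrix_elem 1 0))

lemma Adiag_carrier : (Adiag : Set G2) = Rdiag ×ˢ Rdiag := by
  ext x
  constructor
  · rintro ⟨t, s, rfl⟩
    exact ⟨⟨t, rfl⟩, ⟨s, rfl⟩⟩
  · rintro ⟨⟨t, ht⟩, ⟨s, hs⟩⟩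
    exact ⟨t, s, by rw [Prod.ext_iff]; exact ⟨ht, hs⟩⟩

lemma isClosed_Adiag : IsClosed (Adiag : Set G2) := by
  rw [Adiag_carrier]
  exact isClosed_Rdiag.prod isClosed_Rdiag

lemma exists_near_one (F : Subgroup G2) (hFconn : IsConnected (F : Set G2))
    (hAF : Adiag < F) (U : Set G2) (hU : IsOpen U) (h1 : (1 : G2) ∈ U) :
    ∃ g, g ∈ F ∧ g ∈ U ∧ g ∉ Adiag := by
  by_contra hcon
  push_neg at hcon
  obtain ⟨w, hwF, hwA⟩ := SetLike.exists_of_lt hAF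
  set u : Set G2 := ⋃ a ∈ (Adiag : Set G2), (fun x => a * x) '' U with hu_def
  have hu : IsOpen u := isOpen_biUnion fun a _ => (isOpenMap_mul_left a) U hU
  have hv : IsOpen ((Adiag : Set G2)ᶜ) := isClosed_Adiag.isOpen_compl
  have hsub : (F : Set G2) ⊆ u ∪ (Adiag : Set G2)ᶜ := by
    intro g hg
    by_cases hgA : g ∈ (Adiag : Set G2)
    · exact Or.inl (Set.mem_biUnion hgA ⟨1, h1, mul_one g⟩)
    · exact Or.inr hgA
  have h1u : ((F : Set G2) ∩ u).Nonempty :=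
    ⟨1, F.one_mem, Set.mem_biUnion (Adiag.one_mem) ⟨1, h1, mul_one 1⟩⟩
  have h2v : ((F : Set G2) ∩ (Adiag : Set G2)ᶜ).Nonempty := ⟨w, hwF, hwA⟩
  obtain ⟨x, hxF, hxu, hxv⟩ :=
    hFconn.isPreconnected u ((Adiag : Set G2)ᶜ) hu hv hsub h1u h2v
  rw [hu_def] at hxu
  simp only [Set.mem_iUnion] at hxu
  obtain ⟨a, haA, y, hyU, hxy⟩ := hxu
  have haF : a ∈ F := hAF.le haA
  have hyF : y ∈ F := by
    have : y = a⁻¹ * x := by rw [← hxy]; group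
    rw [this]; exact F.mul_mem (F.inv_mem haF) hxF
  have hyA : y ∈ Adiag := hcon y hyF hyU
  exact hxv (by rw [← hxy]; exact Adiag.mul_mem haA hyA)

/-- The parametrization `(x, y, z, w) ↦ (±(1 0; x 1)(1 y; 0 1), ±(1 0; z 1)(1 w; 0 1))`. -/
def Ev (v : Fin 4 → ℝ) : G2 := (pr (l1 (v 0) * u1 (v 1)), pr (l1 (v 2) * u1 (v 3)))

lemma mul_dm_neg_log (m : SL2) (h : 0 < (m : Matrix (Fin 2) (Fin 2) ℝ) 0 0) :
    m * dm (-Real.log ((m : Matrix (Fin 2) (Fin 2) ℝ) 0 0)) =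
      l1 ((m : Matrix (Fin 2) (Fin 2) ℝ) 1 0 / (m : Matrix (Fin 2) (Fin 2) ℝ) 0 0) *
        u1 ((m : Matrix (Fin 2) (Fin 2) ℝ) 0 1 * (m : Matrix (Fin 2) (Fin 2) ℝ) 0 0) := by
  set a := (m : Matrix (Fin 2) (Fin 2) ℝ) 0 0 with ha
  set x := (m : Matrix (Fin 2) (Fin 2) ℝ) 1 0 / a
  set y' := (m : Matrix (Fin 2) (Fin 2) ℝ) 0 1 / a with hy'
  set c := Real.log a with hc
  have key : m * dm (-c) = l1 x * (dm c * (l1 0 * u1 y') * dm (-c)) := by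
    rw [l1_zero, one_mul]
    rw [ldu m h]
    simp only [mul_assoc]
    rfl
  rw [key, dm_conj, zero_mul, l1_zero, one_mul]
  have hea : Real.exp c = a := Real.exp_log h
  have harg : y' * Real.exp (2 * c) = (m : Matrix (Fin 2) (Fin 2) ℝ) 0 1 * a := by
    rw [exp2, hea, hy']
    field_simp
  rw [harg]

lemma isOpenMap_pr : IsOpenMap pr := QuotientGroup.isOpenMap_coe

lemma exists_small (F : Subgroup G2) (hFconn : IsConnected (F : Set G2))
    (hAF : Adiag < F) {ε : ℝ} (hε : 0 < ε) :
    ∃ v : Fin 4 → ℝ, Ev v ∈ F ∧ v ≠ 0 ∧ ∀ i, |v i| ≤ ε := by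
  set δ := min (ε / 2) (1 / 2) with hδ
  have hδ0 : 0 < δ := lt_min (by linarith) (by norm_num)
  have hδ2 : δ ≤ 1 / 2 := min_le_right _ _
  have hδε : 2 * δ ≤ ε := by
    have := min_le_left (ε / 2) (1 / 2); linarith
  set O : Set SL2 := {m : SL2 | |(m : Matrix (Fin 2) (Fin 2) ℝ) 0 0 - 1| < δ} ∩
      ({m : SL2 | |(m : Matrix (Fin 2) (Fin 2) ℝ) 0 1| < δ} ∩
       {m : SL2 | |(m : Matrix (Fin 2) (Fin 2) ℝ) 1 0| < δ}) with hO_def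
  have hO : IsOpen O := by
    refine IsOpen.inter ?_ (IsOpen.inter ?_ ?_)
    · exact isOpen_lt (((continuous_induced_dom.matrix_elem 0 0).sub
        continuous_const).abs) continuous_const
    · exact isOpen_lt ((continuous_induced_dom.matrix_elem 0 1).abs) continuous_const
    · exact isOpen_lt ((continuous_induced_dom.matrix_elem 1 0).abs) continuous_const
  set U : Set G2 := Prod.map pr pr '' (O ×ˢ O) with hU_def
  have hU : IsOpen U := (isOpenMap_pr.prodMap isOpenMap_pr) _ (hO.prod hO)
  have h1O : (1 : SL2) ∈ O := by
    constructor
    · simp [hδ0]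
    constructor <;> simp [hδ0]
  have h1U : (1 : G2) ∈ U := by
    refine ⟨(1, 1), ⟨h1O, h1O⟩, ?_⟩
    simp [Prod.map]
  obtain ⟨g, hgF, hgU, hgA⟩ := exists_near_one F hFconn hAF U hU h1U
  obtain ⟨⟨m1, m2⟩, ⟨hm1, hm2⟩, rfl⟩ := hgU
  obtain ⟨e1, e2, e3⟩ := hm1
  obtain ⟨f1, f2, f3⟩ := hm2
  simp only [Set.mem_setOf_eq] at e1 e2 e3 f1 f2 f3
  set a1 := (m1 : Matrix (Fin 2) (Fin 2) ℝ) 0 0 with ha1d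
  set a2 := (m2 : Matrix (Fin 2) (Fin 2) ℝ) 0 0 with ha2d
  have ha1 : 0 < a1 := by have := abs_lt.mp e1; linarith
  have ha2 : 0 < a2 := by have := abs_lt.mp f1; linarith
  have ha1' : 1 / 2 ≤ a1 := by have := abs_lt.mp e1; linarith
  have ha2' : 1 / 2 ≤ a2 := by have := abs_lt.mp f1; linarith
  set v : Fin 4 → ℝ := ![(m1 : Matrix (Fin 2) (Fin 2) ℝ) 1 0 / a1,
    (m1 : Matrix (Fin 2) (Fin 2) ℝ) 0 1 * a1,
    (m2 : Matrix (Fin 2) (Fin 2) ℝ) 1 0 / a2,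
    (m2 : Matrix (Fin 2) (Fin 2) ℝ) 0 1 * a2] with hv
  have hv0 : v 0 = (m1 : Matrix (Fin 2) (Fin 2) ℝ) 1 0 / a1 := rfl
  have hv1 : v 1 = (m1 : Matrix (Fin 2) (Fin 2) ℝ) 0 1 * a1 := rfl
  have hv2 : v 2 = (m2 : Matrix (Fin 2) (Fin 2) ℝ) 1 0 / a2 := rfl
  have hv3 : v 3 = (m2 : Matrix (Fin 2) (Fin 2) ℝ) 0 1 * a2 := rfl
  refine ⟨v, ?_, ?_, ?_⟩
  · have key : Ev v = Prod.map pr pr (m1, m2) *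
        (pr (dm (-Real.log a1)), pr (dm (-Real.log a2))) := by
      unfold Ev
      rw [hv0, hv1, hv2, hv3]
      rw [← mul_dm_neg_log m1 ha1, ← mul_dm_neg_log m2 ha2]
      simp [Prod.map]
      exact ⟨rfl, rfl⟩
    rw [key]
    exact F.mul_mem hgF (hAF.le ⟨-Real.log a1, -Real.log a2, rfl⟩)
  · intro h0
    apply hgA
    have z0 : (m1 : Matrix (Fin 2) (Fin 2) ℝ) 1 0 = 0 := by
      have := congrFun h0 0; rw [hv0] at this
      field_simp at this; simpa using this
    have z1 : (m1 : Matrix (Fin 2) (Fin 2) ℝ) 0 1 = 0 := by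
      have := congrFun h0 1; rw [hv1] at this
      simp at this
      rcases this with h | h
      · exact h
      · exact absurd h (ne_of_gt ha1)
    have z2 : (m2 : Matrix (Fin 2) (Fin 2) ℝ) 1 0 = 0 := by
      have := congrFun h0 2; rw [hv2] at this
      field_simp at this; simpa using this
    have z3 : (m2 : Matrix (Fin 2) (Fin 2) ℝ) 0 1 = 0 := by
      have := congrFun h0 3; rw [hv3] at this
      simp at this
      rcases this with h | h
      · exact h
      · exact absurd h (ne_of_gt ha2)
    obtain ⟨t, ht⟩ := (mem_Rdiag_iff m1).mpr ⟨z1, z0⟩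
    obtain ⟨s, hs⟩ := (mem_Rdiag_iff m2).mpr ⟨z3, z2⟩
    exact ⟨t, s, by rw [Prod.ext_iff]; exact ⟨ht, hs⟩⟩
  · intro i
    fin_cases i
    · rw [show v ⟨0, by norm_num⟩ = v 0 from rfl, hv0, abs_div, abs_of_pos ha1,
        div_le_iff₀ ha1]
      nlinarith [le_of_lt e3]
    · rw [show v ⟨1, by norm_num⟩ = v 1 from rfl, hv1, abs_mul, abs_of_pos ha1]
      nlinarith [le_of_lt e2, abs_nonneg ((m1 : Matrix (Fin 2) (Fin 2) ℝ) 0 1),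
        abs_lt.mp e1]
    · rw [show v ⟨2, by norm_num⟩ = v 2 from rfl, hv2, abs_div, abs_of_pos ha2,
        div_le_iff₀ ha2]
      nlinarith [le_of_lt f3]
    · rw [show v ⟨3, by norm_num⟩ = v 3 from rfl, hv3, abs_mul, abs_of_pos ha2]
      nlinarith [le_of_lt f2, abs_nonneg ((m2 : Matrix (Fin 2) (Fin 2) ℝ) 0 1),
        abs_lt.mp f1]

lemma continuous_l1 : Continuous l1 := by
  apply continuous_induced_rng.2
  have : Continuous fun x : ℝ => (!![1, 0; x, 1] : Matrix (Fin 2) (Fin 2) ℝ) := by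
    apply continuous_matrix
    intro i j
    fin_cases i <;> fin_cases j <;>
      simp only [Matrix.cons_val', Matrix.cons_val_zero, Matrix.cons_val_one,
        Matrix.head_cons, Matrix.empty_val', Matrix.cons_val_fin_one, Matrix.head_fin_const] <;>
      first
        | exact continuous_const
        | exact continuous_id
  exact this

lemma continuous_u1 : Continuous u1 := by
  apply continuous_induced_rng.2
  have : Continuous fun x : ℝ => (!![1, x; 0, 1] : Matrix (Fin 2) (Fin 2) ℝ) := by
    apply continuous_matrix
    intro i j
    fin_cases i <;> fin_cases j <;>
      simp only [Matrix.cons_val', Matrix.cons_val_zero, Matrix.cons_val_one,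
        Matrix.head_cons, Matrix.empty_val', Matrix.cons_val_fin_one, Matrix.head_fin_const] <;>
      first
        | exact continuous_const
        | exact continuous_id
  exact this

lemma continuous_Ev : Continuous Ev := by
  unfold Ev
  refine Continuous.prodMk ?_ ?_
  · exact continuous_pr.comp ((continuous_l1.comp (continuous_apply 0)).mul
      (continuous_u1.comp (continuous_apply 1)))
  · exact continuous_pr.comp ((continuous_l1.comp (continuous_apply 2)).mul
      (continuous_u1.comp (continuous_apply 3)))

lemma scale_mem (F : Subgroup G2) (hAF : Adiag < F) {v : Fin 4 → ℝ}
    (hv : Ev v ∈ F) {p q : ℝ} (hp : 0 < p) (hq : 0 < q) :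
    Ev ![v 0 * p, v 1 * p⁻¹, v 2 * q, v 3 * q⁻¹] ∈ F := by
  set t := -(Real.log p) / 2 with ht
  set s := -(Real.log q) / 2 with hs
  have h2t : Real.exp (-2 * t) = p := by
    rw [show -2 * t = Real.log p by rw [ht]; ring]; exact Real.exp_log hp
  have h2t' : Real.exp (2 * t) = p⁻¹ := by
    rw [show 2 * t = -Real.log p by rw [ht]; ring, Real.exp_neg, Real.exp_log hp]
  have h2s : Real.exp (-2 * s) = q := by
    rw [show -2 * s = Real.log q by rw [hs]; ring]; exact Real.exp_log hq
  have h2s' : Real.exp (2 * s) = q⁻¹ := by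
    rw [show 2 * s = -Real.log q by rw [hs]; ring, Real.exp_neg, Real.exp_log hq]
  have c1 : pr (dm t) * pr (l1 (v 0) * u1 (v 1)) * pr (dm (-t)) =
      pr (l1 (v 0 * p) * u1 (v 1 * p⁻¹)) := by
    rw [← _root_.map_mul, ← _root_.map_mul, dm_conj, h2t, h2t']
  have c2 : pr (dm s) * pr (l1 (v 2) * u1 (v 3)) * pr (dm (-s)) =
      pr (l1 (v 2 * q) * u1 (v 3 * q⁻¹)) := by
    rw [← _root_.map_mul, ← _root_.map_mul, dm_conj, h2s, h2s']
  have key : Ev ![v 0 * p, v 1 * p⁻¹, v 2 * q, v 3 * q⁻¹] =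
      (pr (dm t), pr (dm s)) * Ev v * (pr (dm (-t)), pr (dm (-s))) := by
    rw [show Ev ![v 0 * p, v 1 * p⁻¹, v 2 * q, v 3 * q⁻¹] =
        (pr (l1 (v 0 * p) * u1 (v 1 * p⁻¹)), pr (l1 (v 2 * q) * u1 (v 3 * q⁻¹))) from rfl,
      show Ev v = (pr (l1 (v 0) * u1 (v 1)), pr (l1 (v 2) * u1 (v 3))) from rfl,
      Prod.mk_mul_mk, Prod.mk_mul_mk, ← c1, ← c2]
  rw [key]
  have hd1 : ((pr (dm t), pr (dm s)) : G2) ∈ F := hAF.le ⟨t, s, rfl⟩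
  have hd2 : ((pr (dm (-t)), pr (dm (-s))) : G2) ∈ F := hAF.le ⟨-t, -s, rfl⟩
  exact F.mul_mem (F.mul_mem hd1 hv) hd2

lemma normalizeF (F : Subgroup G2) (hAF : Adiag < F) {v : Fin 4 → ℝ} (hvF : Ev v ∈ F)
    (hvne : v ≠ 0) {μ : ℝ} (hμ1 : μ ≤ 1) (hb : ∀ i, |v i| ≤ μ) :
    ∃ u : Fin 4 → ℝ, Ev u ∈ F ∧ ∃ (i : Fin 4) (ε : ℝ),
      |ε| = 1 ∧ u i = ε ∧ ∀ j, j ≠ i → |u j| ≤ 2 * μ := by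
  obtain ⟨i, hi⟩ := Finite.exists_max fun j => |v j|
  have hm0 : 0 < |v i| := by
    rcases (abs_nonneg (v i)).lt_or_eq with h | h
    · exact h
    · exfalso; apply hvne; funext j
      have hj := hi j
      rw [← h] at hj
      exact abs_nonpos_iff.mp hj
  have hmμ : |v i| ≤ μ := hb i
  have hm1 : |v i| ≤ 1 := hmμ.trans hμ1
  have hμ0 : 0 < μ := lt_of_lt_of_le hm0 hmμ
  have hcase : i = 0 ∨ i = 1 ∨ i = 2 ∨ i = 3 := by
    rcases i with ⟨k, hk⟩
    interval_cases k
    · exact Or.inl (Fin.ext rfl)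
    · exact Or.inr (Or.inl (Fin.ext rfl))
    · exact Or.inr (Or.inr (Or.inl (Fin.ext rfl)))
    · exact Or.inr (Or.inr (Or.inr (Fin.ext rfl)))
  rcases hcase with rfl | rfl | rfl | rfl
  · -- i = 0
    set m := |v 0| with hm
    set q := m / (|v 2| + m ^ 2) with hq_def
    have hD : 0 < |v 2| + m ^ 2 := by positivity
    have hq : 0 < q := by positivity
    refine ⟨![v 0 * m⁻¹, v 1 * m⁻¹⁻¹, v 2 * q, v 3 * q⁻¹],
      scale_mem F hAF hvF (inv_pos.mpr hm0) hq, 0, v 0 * m⁻¹, ?_, rfl, ?_⟩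
    · rw [abs_mul, abs_inv, ← hm, abs_of_pos hm0, mul_inv_cancel₀ (ne_of_gt hm0)]
    · intro j hj
      fin_cases j
      · simp at hj
      · show |v 1 * m⁻¹⁻¹| ≤ 2 * μ
        rw [inv_inv, abs_mul, abs_of_pos hm0]
        nlinarith [hi 1, abs_nonneg (v 1)]
      · show |v 2 * q| ≤ 2 * μ
        rw [abs_mul, abs_of_pos hq, hq_def, mul_div_assoc', div_le_iff₀ hD]
        nlinarith [hi 2, abs_nonneg (v 2)]
      · show |v 3 * q⁻¹| ≤ 2 * μ
        rw [abs_mul, abs_of_pos (inv_pos.mpr hq), hq_def, inv_div, mul_div_assoc',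
          div_le_iff₀ hm0]
        nlinarith [hi 3, hi 2, abs_nonneg (v 3), abs_nonneg (v 2)]
  · -- i = 1
    set m := |v 1| with hm
    set q := m / (|v 2| + m ^ 2) with hq_def
    have hD : 0 < |v 2| + m ^ 2 := by positivity
    have hq : 0 < q := by positivity
    refine ⟨![v 0 * m, v 1 * m⁻¹, v 2 * q, v 3 * q⁻¹],
      scale_mem F hAF hvF hm0 hq, 1, v 1 * m⁻¹, ?_, rfl, ?_⟩
    · rw [abs_mul, abs_inv, ← hm, abs_of_pos hm0, mul_inv_cancel₀ (ne_of_gt hm0)]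
    · intro j hj
      fin_cases j
      · show |v 0 * m| ≤ 2 * μ
        rw [abs_mul, abs_of_pos hm0]
        nlinarith [hi 0, abs_nonneg (v 0)]
      · simp at hj
      · show |v 2 * q| ≤ 2 * μ
        rw [abs_mul, abs_of_pos hq, hq_def, mul_div_assoc', div_le_iff₀ hD]
        nlinarith [hi 2, abs_nonneg (v 2)]
      · show |v 3 * q⁻¹| ≤ 2 * μ
        rw [abs_mul, abs_of_pos (inv_pos.mpr hq), hq_def, inv_div, mul_div_assoc',
          div_le_iff₀ hm0]
        nlinarith [hi 3, hi 2, abs_nonneg (v 3), abs_nonneg (v 2)]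
  · -- i = 2
    set m := |v 2| with hm
    set p := m / (|v 0| + m ^ 2) with hp_def
    have hD : 0 < |v 0| + m ^ 2 := by positivity
    have hp : 0 < p := by positivity
    refine ⟨![v 0 * p, v 1 * p⁻¹, v 2 * m⁻¹, v 3 * m⁻¹⁻¹],
      scale_mem F hAF hvF hp (inv_pos.mpr hm0), 2, v 2 * m⁻¹, ?_, rfl, ?_⟩
    · rw [abs_mul, abs_inv, ← hm, abs_of_pos hm0, mul_inv_cancel₀ (ne_of_gt hm0)]
    · intro j hj
      fin_cases j
      · show |v 0 * p| ≤ 2 * μ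
        rw [abs_mul, abs_of_pos hp, hp_def, mul_div_assoc', div_le_iff₀ hD]
        nlinarith [hi 0, abs_nonneg (v 0)]
      · show |v 1 * p⁻¹| ≤ 2 * μ
        rw [abs_mul, abs_of_pos (inv_pos.mpr hp), hp_def, inv_div, mul_div_assoc',
          div_le_iff₀ hm0]
        nlinarith [hi 1, hi 0, abs_nonneg (v 1), abs_nonneg (v 0)]
      · simp at hj
      · show |v 3 * m⁻¹⁻¹| ≤ 2 * μ
        rw [inv_inv, abs_mul, abs_of_pos hm0]
        nlinarith [hi 3, abs_nonneg (v 3)]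
  · -- i = 3
    set m := |v 3| with hm
    set p := m / (|v 0| + m ^ 2) with hp_def
    have hD : 0 < |v 0| + m ^ 2 := by positivity
    have hp : 0 < p := by positivity
    refine ⟨![v 0 * p, v 1 * p⁻¹, v 2 * m, v 3 * m⁻¹],
      scale_mem F hAF hvF hp hm0, 3, v 3 * m⁻¹, ?_, rfl, ?_⟩
    · rw [abs_mul, abs_inv, ← hm, abs_of_pos hm0, mul_inv_cancel₀ (ne_of_gt hm0)]
    · intro j hj
      fin_cases j
      · show |v 0 * p| ≤ 2 * μ
        rw [abs_mul, abs_of_pos hp, hp_def, mul_div_assoc', div_le_iff₀ hD]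
        nlinarith [hi 0, abs_nonneg (v 0)]
      · show |v 1 * p⁻¹| ≤ 2 * μ
        rw [abs_mul, abs_of_pos (inv_pos.mpr hp), hp_def, inv_div, mul_div_assoc',
          div_le_iff₀ hm0]
        nlinarith [hi 1, hi 0, abs_nonneg (v 1), abs_nonneg (v 0)]
      · show |v 2 * m| ≤ 2 * μ
        rw [abs_mul, abs_of_pos hm0]
        nlinarith [hi 2, abs_nonneg (v 2)]
      · simp at hj

lemma vec_eq_4 (a b c d : ℝ) {a' b' c' d' : ℝ} (h0 : a = a') (h1 : b = b')
    (h2 : c = c') (h3 : d = d') : ![a, b, c, d] = ![a', b', c', d'] := by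
  subst h0 h1 h2 h3; rfl

lemma Ev_l1_fst (t : ℝ) : Ev ![t, 0, 0, 0] = ((pr (l1 t), 1) : G2) := by
  unfold Ev
  rw [show (![t, 0, 0, 0] : Fin 4 → ℝ) 0 = t from rfl,
    show (![t, 0, 0, 0] : Fin 4 → ℝ) 1 = 0 from rfl,
    show (![t, 0, 0, 0] : Fin 4 → ℝ) 2 = 0 from rfl,
    show (![t, 0, 0, 0] : Fin 4 → ℝ) 3 = 0 from rfl,
    u1_zero, l1_zero]
  simp

lemma Ev_u1_fst (t : ℝ) : Ev ![0, t, 0, 0] = ((pr (u1 t), 1) : G2) := by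
  unfold Ev
  rw [show (![0, t, 0, 0] : Fin 4 → ℝ) 0 = 0 from rfl,
    show (![0, t, 0, 0] : Fin 4 → ℝ) 1 = t from rfl,
    show (![0, t, 0, 0] : Fin 4 → ℝ) 2 = 0 from rfl,
    show (![0, t, 0, 0] : Fin 4 → ℝ) 3 = 0 from rfl,
    u1_zero, l1_zero]
  simp

lemma Ev_l1_snd (t : ℝ) : Ev ![0, 0, t, 0] = ((1, pr (l1 t)) : G2) := by
  unfold Ev
  rw [show (![0, 0, t, 0] : Fin 4 → ℝ) 0 = 0 from rfl,
    show (![0, 0, t, 0] : Fin 4 → ℝ) 1 = 0 from rfl,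
    show (![0, 0, t, 0] : Fin 4 → ℝ) 2 = t from rfl,
    show (![0, 0, t, 0] : Fin 4 → ℝ) 3 = 0 from rfl,
    u1_zero, l1_zero]
  simp

lemma Ev_u1_snd (t : ℝ) : Ev ![0, 0, 0, t] = ((1, pr (u1 t)) : G2) := by
  unfold Ev
  rw [show (![0, 0, 0, t] : Fin 4 → ℝ) 0 = 0 from rfl,
    show (![0, 0, 0, t] : Fin 4 → ℝ) 1 = 0 from rfl,
    show (![0, 0, 0, t] : Fin 4 → ℝ) 2 = 0 from rfl,
    show (![0, 0, 0, t] : Fin 4 → ℝ) 3 = t from rfl,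
    u1_zero, l1_zero]
  simp

lemma U1m_sub (F : Subgroup G2) (hAF : Adiag < F) {ε : ℝ} (hε : ε ≠ 0)
    (h : Ev ![ε, 0, 0, 0] ∈ F) : U1m ⊆ (F : Set G2) := by
  have main : ∀ s : ℝ, 0 < s / ε → ((pr (l1 s), 1) : G2) ∈ F := by
    intro s hs
    have := scale_mem F hAF h hs one_pos
    rw [show (![ε, 0, 0, 0] : Fin 4 → ℝ) 0 = ε from rfl,
      show (![ε, 0, 0, 0] : Fin 4 → ℝ) 1 = 0 from rfl,
      show (![ε, 0, 0, 0] : Fin 4 → ℝ) 2 = 0 from rfl,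
      show (![ε, 0, 0, 0] : Fin 4 → ℝ) 3 = 0 from rfl] at this
    rw [vec_eq_4 _ _ _ _ (show ε * (s / ε) = s by field_simp) (zero_mul _)
      (zero_mul _) (zero_mul _), Ev_l1_fst] at this
    exact this
  rintro g ⟨t, rfl⟩
  rcases eq_or_ne t 0 with rfl | ht
  · rw [l1_zero, _root_.map_one]
    exact F.one_mem
  · rcases (div_ne_zero ht hε).lt_or_gt with hneg | hpos
    · have h1 : ((pr (l1 (-t)), 1) : G2) ∈ F := by
        apply main
        rw [neg_div]
        linarith
      have h2 := F.inv_mem h1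
      rw [show ((pr (l1 (-t)), 1) : G2)⁻¹ = (pr ((l1 (-t))⁻¹), 1) by
          rw [Prod.inv_mk, _root_.map_inv, inv_one],
        l1_inv, neg_neg] at h2
      exact h2
    · exact main t hpos

lemma U1p_sub (F : Subgroup G2) (hAF : Adiag < F) {ε : ℝ} (hε : ε ≠ 0)
    (h : Ev ![0, ε, 0, 0] ∈ F) : U1p ⊆ (F : Set G2) := by
  have main : ∀ s : ℝ, 0 < s / ε → ((pr (u1 s), 1) : G2) ∈ F := by
    intro s hs
    have := scale_mem F hAF h (inv_pos.mpr hs) one_pos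
    rw [show (![0, ε, 0, 0] : Fin 4 → ℝ) 0 = 0 from rfl,
      show (![0, ε, 0, 0] : Fin 4 → ℝ) 1 = ε from rfl,
      show (![0, ε, 0, 0] : Fin 4 → ℝ) 2 = 0 from rfl,
      show (![0, ε, 0, 0] : Fin 4 → ℝ) 3 = 0 from rfl] at this
    rw [vec_eq_4 _ _ _ _ (zero_mul _) (show ε * (s / ε)⁻¹⁻¹ = s by
        rw [inv_inv]; field_simp) (zero_mul _) (zero_mul _), Ev_u1_fst] at this
    exact this
  rintro g ⟨t, rfl⟩
  rcases eq_or_ne t 0 with rfl | ht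
  · rw [u1_zero, _root_.map_one]
    exact F.one_mem
  · rcases (div_ne_zero ht hε).lt_or_gt with hneg | hpos
    · have h1 : ((pr (u1 (-t)), 1) : G2) ∈ F := by
        apply main
        rw [neg_div]
        linarith
      have h2 := F.inv_mem h1
      rw [show ((pr (u1 (-t)), 1) : G2)⁻¹ = (pr ((u1 (-t))⁻¹), 1) by
          rw [Prod.inv_mk, _root_.map_inv, inv_one],
        u1_inv, neg_neg] at h2
      exact h2
    · exact main t hpos

lemma U2m_sub (F : Subgroup G2) (hAF : Adiag < F) {ε : ℝ} (hε : ε ≠ 0)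
    (h : Ev ![0, 0, ε, 0] ∈ F) : U2m ⊆ (F : Set G2) := by
  have main : ∀ s : ℝ, 0 < s / ε → ((1, pr (l1 s)) : G2) ∈ F := by
    intro s hs
    have := scale_mem F hAF h one_pos hs
    rw [show (![0, 0, ε, 0] : Fin 4 → ℝ) 0 = 0 from rfl,
      show (![0, 0, ε, 0] : Fin 4 → ℝ) 1 = 0 from rfl,
      show (![0, 0, ε, 0] : Fin 4 → ℝ) 2 = ε from rfl,
      show (![0, 0, ε, 0] : Fin 4 → ℝ) 3 = 0 from rfl] at this
    rw [vec_eq_4 _ _ _ _ (zero_mul _) (zero_mul _)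
      (show ε * (s / ε) = s by field_simp) (zero_mul _), Ev_l1_snd] at this
    exact this
  rintro g ⟨t, rfl⟩
  rcases eq_or_ne t 0 with rfl | ht
  · rw [l1_zero, _root_.map_one]
    exact F.one_mem
  · rcases (div_ne_zero ht hε).lt_or_gt with hneg | hpos
    · have h1 : ((1, pr (l1 (-t))) : G2) ∈ F := by
        apply main
        rw [neg_div]
        linarith
      have h2 := F.inv_mem h1
      rw [show ((1, pr (l1 (-t))) : G2)⁻¹ = (1, pr ((l1 (-t))⁻¹)) by
          rw [Prod.inv_mk, _root_.map_inv, inv_one],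
        l1_inv, neg_neg] at h2
      exact h2
    · exact main t hpos

lemma U2p_sub (F : Subgroup G2) (hAF : Adiag < F) {ε : ℝ} (hε : ε ≠ 0)
    (h : Ev ![0, 0, 0, ε] ∈ F) : U2p ⊆ (F : Set G2) := by
  have main : ∀ s : ℝ, 0 < s / ε → ((1, pr (u1 s)) : G2) ∈ F := by
    intro s hs
    have := scale_mem F hAF h one_pos (inv_pos.mpr hs)
    rw [show (![0, 0, 0, ε] : Fin 4 → ℝ) 0 = 0 from rfl,
      show (![0, 0, 0, ε] : Fin 4 → ℝ) 1 = 0 from rfl,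
      show (![0, 0, 0, ε] : Fin 4 → ℝ) 2 = 0 from rfl,
      show (![0, 0, 0, ε] : Fin 4 → ℝ) 3 = ε from rfl] at this
    rw [vec_eq_4 _ _ _ _ (zero_mul _) (zero_mul _) (zero_mul _)
      (show ε * (s / ε)⁻¹⁻¹ = s by rw [inv_inv]; field_simp), Ev_u1_snd] at this
    exact this
  rintro g ⟨t, rfl⟩
  rcases eq_or_ne t 0 with rfl | ht
  · rw [u1_zero, _root_.map_one]
    exact F.one_mem
  · rcases (div_ne_zero ht hε).lt_or_gt with hneg | hpos
    · have h1 : ((1, pr (u1 (-t))) : G2) ∈ F := by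
        apply main
        rw [neg_div]
        linarith
      have h2 := F.inv_mem h1
      rw [show ((1, pr (u1 (-t))) : G2)⁻¹ = (1, pr ((u1 (-t))⁻¹)) by
          rw [Prod.inv_mk, _root_.map_inv, inv_one],
        u1_inv, neg_neg] at h2
      exact h2
    · exact main t hpos

/-- Every closed connected subgroup of `G = PSL(2, ℝ) × PSL(2, ℝ)` strictly containing the
maximal diagonal subgroup `A` contains one of the four unipotent root subgroups
`U₁⁺, U₁⁻, U₂⁺, U₂⁻`. -/
theorem unipotent_subgroup_of_closed_connected_gt_Adiag
    (F : Subgroup G2) (hFclosed : IsClosed (F : Set G2))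
    (hFconn : IsConnected (F : Set G2)) (hAF : Adiag < F) :
    U1p ⊆ (F : Set G2) ∨ U1m ⊆ (F : Set G2) ∨
      U2p ⊆ (F : Set G2) ∨ U2m ⊆ (F : Set G2) := by
  classical
  have hμpos : ∀ n : ℕ, (0 : ℝ) < 1 / ((n : ℝ) + 1) := fun n => by positivity
  have hsmall := fun n : ℕ => exists_small F hFconn hAF (hμpos n)
  choose v hvF hvne hvb using hsmall
  have hμ1 : ∀ n : ℕ, 1 / ((n : ℝ) + 1) ≤ 1 := by
    intro n
    rw [div_le_one (by positivity)]
    linarith [Nat.cast_nonneg (α := ℝ) n]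
  have hnorm := fun n : ℕ => normalizeF F hAF (hvF n) (hvne n) (hμ1 n) (hvb n)
  choose u huF i ε hε hui hub using hnorm
  set c : ℕ → Fin 4 × Bool := fun n => (i n, if ε n = 1 then true else false) with hc
  obtain ⟨⟨i₀, b₀⟩, hy⟩ := Finite.exists_infinite_fiber c
  have hinf : (c ⁻¹' {(i₀, b₀)}).Infinite := Set.infinite_coe_iff.mp hy
  set ε₀ : ℝ := if b₀ then 1 else -1 with hε₀def
  have hε₀ne : ε₀ ≠ 0 := by rcases b₀ <;> simp [hε₀def]
  have hfib : ∀ n ∈ c ⁻¹' {(i₀, b₀)}, i n = i₀ ∧ ε n = ε₀ := by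
    intro n hn
    simp only [Set.mem_preimage, Set.mem_singleton_iff, hc, Prod.mk.injEq] at hn
    obtain ⟨h1, h2⟩ := hn
    refine ⟨h1, ?_⟩
    by_cases hb : ε n = 1
    · have hb₀ : b₀ = true := by rw [← h2]; simp [hb]
      rw [hb, hε₀def, hb₀]
      simp
    · have hbm : ε n = -1 := by
        rcases (abs_eq (by norm_num : (0:ℝ) ≤ 1)).mp (hε n) with h | h
        · exact absurd h hb
        · exact h
      have hb₀ : b₀ = false := by rw [← h2]; simp [hb]
      rw [hbm, hε₀def, hb₀]
      simp
  have hSclosed : IsClosed {w : Fin 4 → ℝ | Ev w ∈ F} := hFclosed.preimage continuous_Ev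
  have hmem : Ev (Pi.single i₀ ε₀) ∈ F := by
    have hcl : Pi.single i₀ ε₀ ∈ closure {w : Fin 4 → ℝ | Ev w ∈ F} := by
      rw [Metric.mem_closure_iff]
      intro r hr
      obtain ⟨N, hN⟩ := exists_nat_gt (2 / r)
      obtain ⟨n, hn, hNn⟩ := hinf.exists_gt N
      refine ⟨u n, huF n, ?_⟩
      obtain ⟨hin, hen⟩ := hfib n hn
      have hNr : (2 : ℝ) < r * ((n : ℝ) + 1) := by
        have h1 : (2 : ℝ) < r * N := by
          have := (div_lt_iff₀ hr).mp hN
          linarith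
        have h2 : (N : ℝ) < (n : ℝ) := Nat.cast_lt.mpr hNn
        nlinarith
      have hrn : 2 * (1 / ((n : ℝ) + 1)) < r := by
        have hpos : (0 : ℝ) < (n : ℝ) + 1 := by positivity
        rw [mul_one_div, div_lt_iff₀ hpos]
        linarith
      rw [dist_pi_lt_iff hr]
      intro j
      by_cases hj : j = i₀
      · subst hj
        have : u n j = ε₀ := by rw [← hin, hui n, hen]
        rw [Pi.single_eq_same, this, dist_self]
        exact hr
      · rw [Pi.single_eq_of_ne hj, Real.dist_eq, zero_sub, abs_neg]
        have hb := hub n j (by rw [hin]; exact hj)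
        exact lt_of_le_of_lt hb hrn
    exact hSclosed.closure_subset hcl
  have hcase : i₀ = 0 ∨ i₀ = 1 ∨ i₀ = 2 ∨ i₀ = 3 := by
    rcases i₀ with ⟨k, hk⟩
    interval_cases k
    · exact Or.inl (Fin.ext rfl)
    · exact Or.inr (Or.inl (Fin.ext rfl))
    · exact Or.inr (Or.inr (Or.inl (Fin.ext rfl)))
    · exact Or.inr (Or.inr (Or.inr (Fin.ext rfl)))
  rcases hcase with rfl | rfl | rfl | rfl
  · refine Or.inr (Or.inl (U1m_sub F hAF hε₀ne ?_))
    have hv : Pi.single (0 : Fin 4) ε₀ = ![ε₀, 0, 0, 0] := by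
      funext j; fin_cases j <;> simp [Pi.single_apply]
    rw [← hv]; exact hmem
  · refine Or.inl (U1p_sub F hAF hε₀ne ?_)
    have hv : Pi.single (1 : Fin 4) ε₀ = ![0, ε₀, 0, 0] := by
      funext j; fin_cases j <;> simp [Pi.single_apply]
    rw [← hv]; exact hmem
  · refine Or.inr (Or.inr (Or.inr (U2m_sub F hAF hε₀ne ?_)))
    have hv : Pi.single (2 : Fin 4) ε₀ = ![0, 0, ε₀, 0] := by
      funext j; fin_cases j <;> simp [Pi.single_apply]
    rw [← hv]; exact hmem
  · refine Or.inr (Or.inr (Or.inl (U2p_sub F hAF hε₀ne ?_)))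
    have hv : Pi.single (3 : Fin 4) ε₀ = ![0, 0, 0, ε₀] := by
      funext j; fin_cases j <;> simp [Pi.single_apply]
    rw [← hv]; exact hmem
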